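/- For D₂ = P⁻¹(B D₁ - A) with P symmetric positive definite, if the symmetric part A + Aᵀ is positive semidefinite, then any solution of d/dt u = β D₂ u with β ≥ 0 satisfies d/dt (uᵀ P u) ≤ 2β uᵀ B D₁ u. -/

import Mathlib

open Matrix

theorem stmt12 (N : ℕ) (hN : 2 ≤ N) (P A D₁ D₂ : Matrix (Fin N) (Fin N) ℝ)
    (hP : P.PosDef)
    (hA : (A + Aᵀ).PosSemidef)
    (B : Matrix (Fin N) (Fin N) ℝ)
    (hBdef : B = Matrix.diagonal (fun i : Fin N =>
      if (i : ℕ) = 0 then (-1 : ℝ) else if (i : ℕ) = N - 1 then 1 else 0))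
    (hD₂ : D₂ = P⁻¹ * (B * D₁ - A))
    (β : ℝ) (hβ : 0 ≤ β)
    (u : ℝ → Fin N → ℝ)
    (hu : ∀ t, HasDerivAt u (β • (D₂ *ᵥ u t)) t) :
    ∀ t, deriv (fun s => u s ⬝ᵥ (P *ᵥ u s)) t ≤
      2 * β * (u t ⬝ᵥ (B *ᵥ (D₁ *ᵥ u t))) := by
  intro t
  set v : Fin N → ℝ := β • (D₂ *ᵥ u t) with hv
  have h1 : ∀ i, HasDerivAt (fun s => u s i) (v i) t := hasDerivAt_pi.mp (hu t)
  -- derivative of the quadratic form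
  have hder : HasDerivAt (fun s => u s ⬝ᵥ (P *ᵥ u s))
      (v ⬝ᵥ (P *ᵥ u t) + u t ⬝ᵥ (P *ᵥ v)) t := by
    have key : HasDerivAt (fun s => ∑ i, ∑ j, u s i * (P i j * u s j))
        (∑ i, ∑ j, (v i * (P i j * u t j) + u t i * (P i j * v j))) t := by
      refine HasDerivAt.fun_sum fun i _ => HasDerivAt.fun_sum fun j _ => ?_
      exact (h1 i).mul ((h1 j).const_mul (P i j))
    have e1 : (fun s => u s ⬝ᵥ (P *ᵥ u s)) = fun s => ∑ i, ∑ j, u s i * (P i j * u s j) := by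
      funext s
      simp [dotProduct, mulVec, Finset.mul_sum]
    have e2 : v ⬝ᵥ (P *ᵥ u t) + u t ⬝ᵥ (P *ᵥ v)
        = ∑ i, ∑ j, (v i * (P i j * u t j) + u t i * (P i j * v j)) := by
      simp [dotProduct, mulVec, Finset.mul_sum, Finset.sum_add_distrib]
    rw [e1, e2]
    exact key
  rw [hder.deriv]
  -- algebraic computation
  have hPD₂ : P * D₂ = B * D₁ - A := by
    rw [hD₂, ← Matrix.mul_assoc, Matrix.mul_nonsing_inv P
      (isUnit_iff_ne_zero.mpr hP.det_pos.ne'), Matrix.one_mul]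
  have hPsymm : Pᵀ = P := hP.1
  have hPv : P *ᵥ v = β • ((B * D₁ - A) *ᵥ u t) := by
    rw [hv, Matrix.mulVec_smul, Matrix.mulVec_mulVec, hPD₂]
  have hvPu : v ⬝ᵥ (P *ᵥ u t) = (P *ᵥ v) ⬝ᵥ u t := by
    rw [Matrix.dotProduct_mulVec, ← Matrix.mulVec_transpose, hPsymm, dotProduct_comm]
  rw [hvPu, hPv]
  have hAnn : 0 ≤ u t ⬝ᵥ ((A + Aᵀ) *ᵥ u t) := by have := hA.dotProduct_mulVec_nonneg (u t); simpa using this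
  have hMt : ∀ M : Matrix (Fin N) (Fin N) ℝ, (Mᵀ *ᵥ u t) ⬝ᵥ u t = u t ⬝ᵥ (M *ᵥ u t) := by
    intro M
    rw [dotProduct_comm, Matrix.dotProduct_mulVec, ← Matrix.mulVec_transpose, dotProduct_comm,
      Matrix.transpose_transpose]
  have expand : (β • ((B * D₁ - A) *ᵥ u t)) ⬝ᵥ u t + u t ⬝ᵥ (β • ((B * D₁ - A) *ᵥ u t))
      = 2 * β * (u t ⬝ᵥ (B *ᵥ (D₁ *ᵥ u t))) - β * (u t ⬝ᵥ ((A + Aᵀ) *ᵥ u t)) := by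
    have h3 : ((B * D₁ - A) *ᵥ u t) ⬝ᵥ u t = u t ⬝ᵥ ((B * D₁ - A)ᵀ *ᵥ u t) := by
      rw [← hMt ((B * D₁ - A)ᵀ), Matrix.transpose_transpose]
    rw [smul_dotProduct, dotProduct_smul, h3]
    rw [Matrix.transpose_sub, Matrix.sub_mulVec, Matrix.sub_mulVec, Matrix.add_mulVec,
      dotProduct_sub, dotProduct_sub, dotProduct_add]
    have h4 : u t ⬝ᵥ ((B * D₁)ᵀ *ᵥ u t) = u t ⬝ᵥ (B *ᵥ (D₁ *ᵥ u t)) := by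
      rw [dotProduct_comm, hMt, ← Matrix.mulVec_mulVec]
    rw [h4, Matrix.mulVec_mulVec]
    simp only [smul_eq_mul]
    ring
  rw [expand]
  nlinarith [mul_nonneg hβ hAnn]
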